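/- Fix β ∈ ℝ. Suppose h_N satisfies the LDP with respect to the prior measures P_N with rate function u ↦ −s(u), where s : ℝ → ℝ ∪ {−∞} is upper semicontinuous and not identically −∞; suppose the moment condition lim_{L→∞} limsup_{N→∞} (1/N) ln ∫_{{ω : −β h_N(ω) ≥ L}} e^{−β N h_N(ω)} dP_N(ω) = −∞ holds; and suppose φ(β) = inf_{v ∈ ℝ} (β v − s(v)) is finite. Then h_N satisfies the LDP with respect to the canonical ensembles P_{N,β} with rate function J_β(u) = β u − s(u) − φ(β) (with J_β(u) = +∞ where s(u) = −∞). -/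

import Mathlib

/-!
STATEMENT 1: If the mean energies `h N` satisfy the LDP with respect to the prior
probability measures `P N` with rate function `u ↦ -s u`, the Varadhan moment condition
holds for `F = -β h`, and `φ(β) = inf_v (β v - s v)` is finite, then `h N` satisfies the
LDP with respect to the canonical ensembles `P_{N,β}` with rate function
`J_β(u) = β u - s u - φ(β)` (automatically `+∞` where `s u = -∞`, by the `EReal`
conventions).
-/

open MeasureTheory Filter Set Topology
open scoped ENNReal

/-- The large deviation principle for a sequence of random variables `X N` with respect to
probability measures `Q N`, at speed `N`, with rate function `I : E → [0,∞]`
(lower semicontinuous, nonnegative). -/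
structure IsLDP {Ω : ℕ → Type*} [∀ N, MeasurableSpace (Ω N)] {E : Type*}
    [TopologicalSpace E] (Q : ∀ N, Measure (Ω N)) (X : ∀ N, Ω N → E)
    (I : E → EReal) : Prop where
  nonneg : ∀ x, 0 ≤ I x
  lsc : LowerSemicontinuous I
  upper : ∀ C : Set E, IsClosed C → ∀ c : ℝ, (c : EReal) < ⨅ x ∈ C, I x →
    ∀ᶠ N : ℕ in atTop, Q N {ω | X N ω ∈ C} ≤ ENNReal.ofReal (Real.exp (-(N : ℝ) * c))
  lower : ∀ O : Set E, IsOpen O → ∀ c : ℝ, (⨅ x ∈ O, I x) < (c : EReal) →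
    ∀ᶠ N : ℕ in atTop, ENNReal.ofReal (Real.exp (-(N : ℝ) * c)) ≤ Q N {ω | X N ω ∈ O}

lemma lintegral_biUnion_range_le {α : Type*} [MeasurableSpace α] (μ : Measure α)
    (f : α → ℝ≥0∞) (A : ℕ → Set α) (k : ℕ) :
    ∫⁻ x in ⋃ j ∈ Finset.range k, A j, f x ∂μ ≤ ∑ j ∈ Finset.range k, ∫⁻ x in A j, f x ∂μ := by
  induction k with
  | zero => simp
  | succ k ih =>
    rw [Finset.range_add_one, Finset.set_biUnion_insert, Finset.sum_insert (by simp)]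
    exact le_trans (lintegral_union_le _ _ _) (add_le_add_right ih _)

lemma varadhan_upper {Ω : ℕ → Type*} [∀ N, MeasurableSpace (Ω N)]
    (P : ∀ N, Measure (Ω N)) [∀ N, IsProbabilityMeasure (P N)]
    (h : ∀ N, Ω N → ℝ) (hmeas : ∀ N, Measurable (h N))
    (β : ℝ) (s : ℝ → EReal)
    (hLDP : IsLDP P h fun u => -(s u))
    (hmoment : ∀ M : ℝ, ∀ᶠ L in (atTop : Filter ℝ), ∀ᶠ N : ℕ in atTop,
      (∫⁻ ω in {ω | L ≤ -(β * h N ω)},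
          ENNReal.ofReal (Real.exp (-(β * (N : ℝ) * h N ω))) ∂(P N))
        ≤ ENNReal.ofReal (Real.exp (-(N : ℝ) * M)))
    (C : Set ℝ) (hC : IsClosed C) (r : ℝ)
    (hr : (r : EReal) < ⨅ u ∈ C, ((β * u : ℝ) : EReal) - s u) :
    ∀ᶠ N : ℕ in atTop,
      (∫⁻ ω in {ω | h N ω ∈ C}, ENNReal.ofReal (Real.exp (-(β * (N : ℝ) * h N ω))) ∂(P N))
        ≤ ENNReal.ofReal (Real.exp (-(N : ℝ) * r)) := by
  obtain ⟨r1, hrr1E, hr1iE⟩ := EReal.exists_between_coe_real hr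
  obtain ⟨r2, hr12E, hr2iE⟩ := EReal.exists_between_coe_real hr1iE
  have hrr1 : r < r1 := by exact_mod_cast hrr1E
  have hr12 : r1 < r2 := by exact_mod_cast hr12E
  -- key EReal extraction
  have key : ∀ u ∈ C, ∀ a : ℝ, a ≤ -(β * u) → ((r2 + a : ℝ) : EReal) ≤ -(s u) := by
    intro u hu a ha
    have h1 : (r2 : EReal) ≤ ((β * u : ℝ) : EReal) - s u :=
      le_of_lt (lt_of_lt_of_le hr2iE (iInf₂_le u hu))
    rcases eq_or_ne (s u) ⊥ with hb | hb
    · simp [hb]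
    · have hst : s u ≠ ⊤ := by
        intro ht
        have h0 := hLDP.nonneg u
        rw [ht] at h0
        simp at h0
      have hsd : s u = ((s u).toReal : EReal) := (EReal.coe_toReal hst hb).symm
      set d := (s u).toReal with hd
      rw [hsd, ← EReal.coe_sub] at h1
      have h2 : r2 ≤ β * u - d := by exact_mod_cast h1
      rw [hsd, ← EReal.coe_neg]
      exact_mod_cast (by linarith : r2 + a ≤ -d)
  -- parameters
  set q : ℝ := (r + r1) / 2 with hqdef
  have hrq : r < q := by rw [hqdef]; linarith
  have hqr1 : q < r1 := by rw [hqdef]; linarith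
  set δ : ℝ := r1 - q with hδdef
  have hδpos : 0 < δ := by rw [hδdef]; linarith
  obtain ⟨L, hLtail⟩ := (hmoment q).exists
  set a0 : ℝ := -q with ha0
  set k : ℕ := ⌈(L - a0) / δ⌉₊ with hk
  have hLk : L ≤ a0 + k * δ := by
    have h1 := Nat.le_ceil ((L - a0) / δ)
    rw [div_le_iff₀ hδpos] at h1
    rw [← hk] at h1
    linarith
  set S : ℕ → Set ℝ :=
    fun j => (C ∩ {u | a0 + j * δ ≤ -(β * u)}) ∩ {u | -(β * u) ≤ a0 + (j + 1) * δ} with hS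
  have hSclosed : ∀ j, IsClosed (S j) := fun j =>
    (hC.inter (isClosed_le continuous_const (continuous_const.mul continuous_id).neg)).inter
      (isClosed_le (continuous_const.mul continuous_id).neg continuous_const)
  have hSinf : ∀ j : ℕ, ((r1 + (a0 + j * δ) : ℝ) : EReal) < ⨅ x ∈ S j, -(s x) := by
    intro j
    refine lt_of_lt_of_le ?_ (le_iInf₂ fun u hu => key u hu.1.1 _ hu.1.2)
    exact_mod_cast (by linarith : r1 + (a0 + j * δ) < r2 + (a0 + j * δ))
  have hub : ∀ᶠ N : ℕ in atTop, ∀ j ∈ Finset.range k,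
      P N {ω | h N ω ∈ S j} ≤ ENNReal.ofReal (Real.exp (-(N : ℝ) * (r1 + (a0 + j * δ)))) :=
    (eventually_all_finset _).2 fun j _ => hLDP.upper (S j) (hSclosed j) _ (hSinf j)
  set N0 : ℕ := ⌈Real.log ((k : ℝ) + 2) / (q - r)⌉₊ with hN0
  filter_upwards [hub, hLtail, eventually_ge_atTop N0] with N hNub hNtail hNge
  set g : Ω N → ℝ≥0∞ := fun ω => ENNReal.ofReal (Real.exp (-(β * (N : ℝ) * h N ω))) with hg
  set E : ℝ≥0∞ := ENNReal.ofReal (Real.exp (-(N : ℝ) * q)) with hE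
  -- generic pointwise-bound integral lemma
  have hexpN : ∀ (A : Set (Ω N)) (b : ℝ), MeasurableSet A → (∀ ω ∈ A, -(β * h N ω) ≤ b) →
      ∫⁻ ω in A, g ω ∂(P N) ≤ ENNReal.ofReal (Real.exp ((N : ℝ) * b)) := by
    intro A b hA hbd
    calc ∫⁻ ω in A, g ω ∂(P N)
        ≤ ∫⁻ _ in A, ENNReal.ofReal (Real.exp ((N : ℝ) * b)) ∂(P N) := by
          refine setLIntegral_mono' hA fun ω hω => ?_
          refine ENNReal.ofReal_le_ofReal (Real.exp_le_exp.2 ?_)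
          have h1 := mul_le_mul_of_nonneg_left (hbd ω hω) (Nat.cast_nonneg N : (0:ℝ) ≤ N)
          nlinarith [h1]
      _ = ENNReal.ofReal (Real.exp ((N : ℝ) * b)) * P N A := setLIntegral_const _ _
      _ ≤ ENNReal.ofReal (Real.exp ((N : ℝ) * b)) * 1 := by
          exact mul_le_mul_right prob_le_one _
      _ = _ := mul_one _
  -- cover
  have hmemS : ∀ j : ℕ, MeasurableSet {ω : Ω N | h N ω ∈ S j} :=
    fun j => (hmeas N) (hSclosed j).measurableSet
  have hAbotMeas : MeasurableSet {ω : Ω N | h N ω ∈ C ∧ -(β * h N ω) ≤ a0} := by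
    have hm : MeasurableSet {u : ℝ | -(β * u) ≤ a0} :=
      measurableSet_le (measurable_const.mul measurable_id).neg measurable_const
    exact (hmeas N) (hC.measurableSet.inter hm)
  have hcover : {ω : Ω N | h N ω ∈ C} ⊆
      (⋃ j ∈ Finset.range k, {ω : Ω N | h N ω ∈ S j}) ∪
        ({ω : Ω N | h N ω ∈ C ∧ -(β * h N ω) ≤ a0} ∪ {ω : Ω N | L ≤ -(β * h N ω)}) := by
    intro ω hω
    by_cases hbot : -(β * h N ω) ≤ a0
    · exact Or.inr (Or.inl ⟨hω, hbot⟩)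
    push_neg at hbot
    by_cases htl : L ≤ -(β * h N ω)
    · exact Or.inr (Or.inr htl)
    push_neg at htl
    left
    set F : ℝ := -(β * h N ω) with hF
    set j : ℕ := ⌊(F - a0) / δ⌋₊ with hj
    have h0 : 0 ≤ (F - a0) / δ := div_nonneg (by linarith) hδpos.le
    have hj1 : (j : ℝ) * δ ≤ F - a0 := by
      have h1 := Nat.floor_le h0
      rwa [le_div_iff₀ hδpos] at h1
    have hj2 : F - a0 < ((j : ℝ) + 1) * δ := by
      have h1 := Nat.lt_floor_add_one ((F - a0) / δ)
      rwa [div_lt_iff₀ hδpos] at h1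
    have hjk : j < k := by
      have h2 : (j : ℝ) * δ < (k : ℝ) * δ := by nlinarith
      have h3 : (j : ℝ) < (k : ℝ) := lt_of_mul_lt_mul_right h2 hδpos.le
      exact_mod_cast h3
    refine Set.mem_biUnion (Finset.mem_range.2 hjk) ?_
    exact ⟨⟨hω, by simp only [Set.mem_setOf_eq]; linarith⟩,
      by simp only [Set.mem_setOf_eq]; linarith⟩
  -- bound each piece by E
  have hslab : ∀ j ∈ Finset.range k, ∫⁻ ω in {ω : Ω N | h N ω ∈ S j}, g ω ∂(P N) ≤ E := by
    intro j hjk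
    calc ∫⁻ ω in {ω : Ω N | h N ω ∈ S j}, g ω ∂(P N)
        ≤ ∫⁻ _ in {ω : Ω N | h N ω ∈ S j},
            ENNReal.ofReal (Real.exp ((N : ℝ) * (a0 + ((j : ℝ) + 1) * δ))) ∂(P N) := by
          refine setLIntegral_mono' (hmemS j) fun ω hω => ?_
          refine ENNReal.ofReal_le_ofReal (Real.exp_le_exp.2 ?_)
          have h1 : -(β * h N ω) ≤ a0 + ((j : ℝ) + 1) * δ := hω.2
          have h2 := mul_le_mul_of_nonneg_left h1 (Nat.cast_nonneg N : (0:ℝ) ≤ N)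
          nlinarith [h2]
      _ = ENNReal.ofReal (Real.exp ((N : ℝ) * (a0 + ((j : ℝ) + 1) * δ))) *
            P N {ω : Ω N | h N ω ∈ S j} := setLIntegral_const _ _
      _ ≤ ENNReal.ofReal (Real.exp ((N : ℝ) * (a0 + ((j : ℝ) + 1) * δ))) *
            ENNReal.ofReal (Real.exp (-(N : ℝ) * (r1 + (a0 + j * δ)))) :=
          mul_le_mul_right (hNub j hjk) _
      _ = E := by
          rw [← ENNReal.ofReal_mul (Real.exp_nonneg _), ← Real.exp_add]
          · congr 2
            have hδq : δ = r1 - q := hδdef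
            nlinarith [hδq]
  have hbot : ∫⁻ ω in {ω : Ω N | h N ω ∈ C ∧ -(β * h N ω) ≤ a0}, g ω ∂(P N) ≤ E := by
    refine le_trans (hexpN _ a0 hAbotMeas fun ω hω => hω.2) ?_
    rw [hE]
    refine le_of_eq ?_
    congr 1
    rw [ha0]; ring
  have hqrpos : 0 < q - r := by linarith
  have hN0le : Real.log ((k : ℝ) + 2) / (q - r) ≤ (N : ℝ) := by
    refine le_trans ?_ (by exact_mod_cast hNge : (N0 : ℝ) ≤ (N : ℝ))
    rw [hN0]
    exact Nat.le_ceil _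
  have hlog : Real.log ((k : ℝ) + 2) ≤ (N : ℝ) * (q - r) := by
    rwa [div_le_iff₀ hqrpos] at hN0le
  have hreal : ((k : ℝ) + 2) * Real.exp (-(N : ℝ) * q) ≤ Real.exp (-(N : ℝ) * r) := by
    rw [← Real.exp_log (by positivity : (0:ℝ) < (k : ℝ) + 2), ← Real.exp_add]
    refine Real.exp_le_exp.2 ?_
    have hNqr : (N : ℝ) * (q - r) = (N : ℝ) * q - (N : ℝ) * r := by ring
    linarith
  calc ∫⁻ ω in {ω : Ω N | h N ω ∈ C}, g ω ∂(P N)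
      ≤ ∫⁻ ω in (⋃ j ∈ Finset.range k, {ω : Ω N | h N ω ∈ S j}) ∪
            ({ω : Ω N | h N ω ∈ C ∧ -(β * h N ω) ≤ a0} ∪ {ω : Ω N | L ≤ -(β * h N ω)}),
            g ω ∂(P N) := lintegral_mono_set hcover
    _ ≤ (∫⁻ ω in ⋃ j ∈ Finset.range k, {ω : Ω N | h N ω ∈ S j}, g ω ∂(P N))
          + ∫⁻ ω in {ω : Ω N | h N ω ∈ C ∧ -(β * h N ω) ≤ a0} ∪ {ω : Ω N | L ≤ -(β * h N ω)},
              g ω ∂(P N) := lintegral_union_le _ _ _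
    _ ≤ (∑ j ∈ Finset.range k, ∫⁻ ω in {ω : Ω N | h N ω ∈ S j}, g ω ∂(P N))
          + ((∫⁻ ω in {ω : Ω N | h N ω ∈ C ∧ -(β * h N ω) ≤ a0}, g ω ∂(P N))
            + ∫⁻ ω in {ω : Ω N | L ≤ -(β * h N ω)}, g ω ∂(P N)) :=
        add_le_add (lintegral_biUnion_range_le _ _ _ _) (lintegral_union_le _ _ _)
    _ ≤ (∑ _j ∈ Finset.range k, E) + (E + E) :=
        add_le_add (Finset.sum_le_sum hslab) (add_le_add hbot hNtail)
    _ = ((k : ℝ≥0∞) + 2) * E := by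
        rw [Finset.sum_const, Finset.card_range, nsmul_eq_mul]
        ring
    _ = ENNReal.ofReal (((k : ℝ) + 2) * Real.exp (-(N : ℝ) * q)) := by
        have hcast : ((k : ℝ≥0∞) + 2) = ENNReal.ofReal ((k : ℝ) + 2) := by
          rw [ENNReal.ofReal_add (by positivity) (by norm_num), ENNReal.ofReal_natCast]
          norm_num
        rw [hcast, hE, ← ENNReal.ofReal_mul (by positivity)]
    _ ≤ ENNReal.ofReal (Real.exp (-(N : ℝ) * r)) := ENNReal.ofReal_le_ofReal hreal

lemma varadhan_lower {Ω : ℕ → Type*} [∀ N, MeasurableSpace (Ω N)]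
    (P : ∀ N, Measure (Ω N)) [∀ N, IsProbabilityMeasure (P N)]
    (h : ∀ N, Ω N → ℝ) (hmeas : ∀ N, Measurable (h N))
    (β : ℝ) (s : ℝ → EReal)
    (hLDP : IsLDP P h fun u => -(s u))
    (O : Set ℝ) (hO : IsOpen O) (t : ℝ)
    (ht : (⨅ u ∈ O, ((β * u : ℝ) : EReal) - s u) < (t : EReal)) :
    ∀ᶠ N : ℕ in atTop,
      ENNReal.ofReal (Real.exp (-(N : ℝ) * t)) ≤
        ∫⁻ ω in {ω | h N ω ∈ O}, ENNReal.ofReal (Real.exp (-(β * (N : ℝ) * h N ω))) ∂(P N) := by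
  simp only [iInf_lt_iff] at ht
  obtain ⟨u0, hu0O, hu0⟩ := ht
  have hsbot : s u0 ≠ ⊥ := by
    intro hb
    rw [hb, EReal.coe_sub_bot] at hu0
    exact not_top_lt hu0
  have hstop : s u0 ≠ ⊤ := by
    intro ht'
    have h0 := hLDP.nonneg u0
    rw [ht'] at h0
    simp at h0
  have hsd : s u0 = ((s u0).toReal : EReal) := (EReal.coe_toReal hstop hsbot).symm
  set d : ℝ := (s u0).toReal with hdd
  rw [hsd, ← EReal.coe_sub] at hu0
  have hu0R : β * u0 - d < t := by exact_mod_cast hu0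
  set ε : ℝ := (t - (β * u0 - d)) / 3 with hε
  have hεpos : 0 < ε := by rw [hε]; linarith
  set c1 : ℝ := -d + ε with hc1
  set ρ : ℝ := ε / (|β| + 1) with hρ
  have hρpos : 0 < ρ := by rw [hρ]; positivity
  set B : Set ℝ := Metric.ball u0 ρ ∩ O with hB
  have hBopen : IsOpen B := Metric.isOpen_ball.inter hO
  have hu0B : u0 ∈ B := ⟨Metric.mem_ball_self hρpos, hu0O⟩
  have hinf : (⨅ x ∈ B, -(s x)) < (c1 : EReal) := by
    refine lt_of_le_of_lt (iInf₂_le u0 hu0B) ?_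
    rw [hsd, ← EReal.coe_neg]
    exact_mod_cast (by linarith : -d < c1)
  have hlow := hLDP.lower B hBopen c1 hinf
  filter_upwards [hlow] with N hN
  have hBmeas : MeasurableSet {ω : Ω N | h N ω ∈ B} := (hmeas N) hBopen.measurableSet
  have hpt : ∀ ω : Ω N, h N ω ∈ B →
      ENNReal.ofReal (Real.exp ((N : ℝ) * (-(β * u0) - ε))) ≤
        ENNReal.ofReal (Real.exp (-(β * (N : ℝ) * h N ω))) := by
    intro ω hω
    refine ENNReal.ofReal_le_ofReal (Real.exp_le_exp.2 ?_)
    have hd1 : |h N ω - u0| < ρ := by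
      have := hω.1
      rwa [Metric.mem_ball, Real.dist_eq] at this
    have hd2 : |β * h N ω - β * u0| ≤ ε := by
      rw [← mul_sub, abs_mul]
      calc |β| * |h N ω - u0| ≤ |β| * ρ := by
            exact mul_le_mul_of_nonneg_left hd1.le (abs_nonneg β)
        _ ≤ (|β| + 1) * ρ := by nlinarith [hρpos]
        _ = ε := by rw [hρ]; field_simp
    have hd3 : -(β * h N ω) ≥ -(β * u0) - ε := by
      have := abs_le.1 hd2
      linarith [this.2]
    have := mul_le_mul_of_nonneg_left hd3 (Nat.cast_nonneg N : (0:ℝ) ≤ N)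
    nlinarith [this]
  calc ENNReal.ofReal (Real.exp (-(N : ℝ) * t))
      ≤ ENNReal.ofReal (Real.exp ((N : ℝ) * (-(β * u0) - ε))) *
          ENNReal.ofReal (Real.exp (-(N : ℝ) * c1)) := by
        rw [← ENNReal.ofReal_mul (Real.exp_nonneg _), ← Real.exp_add]
        refine ENNReal.ofReal_le_ofReal (Real.exp_le_exp.2 ?_)
        have hsum : β * u0 + ε + c1 ≤ t := by rw [hc1]; rw [hε]; linarith
        have := mul_le_mul_of_nonneg_left hsum (Nat.cast_nonneg N : (0:ℝ) ≤ N)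
        nlinarith [this]
    _ ≤ ENNReal.ofReal (Real.exp ((N : ℝ) * (-(β * u0) - ε))) * P N {ω | h N ω ∈ B} :=
        mul_le_mul_right hN _
    _ = ∫⁻ _ in {ω : Ω N | h N ω ∈ B},
          ENNReal.ofReal (Real.exp ((N : ℝ) * (-(β * u0) - ε))) ∂(P N) :=
        (setLIntegral_const _ _).symm
    _ ≤ ∫⁻ ω in {ω : Ω N | h N ω ∈ B},
          ENNReal.ofReal (Real.exp (-(β * (N : ℝ) * h N ω))) ∂(P N) :=
        setLIntegral_mono' hBmeas fun ω hω => hpt ω hω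
    _ ≤ ∫⁻ ω in {ω : Ω N | h N ω ∈ O},
          ENNReal.ofReal (Real.exp (-(β * (N : ℝ) * h N ω))) ∂(P N) :=
        lintegral_mono_set fun ω hω => hω.2

theorem mean_energy_canonical_LDP
    {Ω : ℕ → Type*} [∀ N, MeasurableSpace (Ω N)]
    (P : ∀ N, Measure (Ω N)) [∀ N, IsProbabilityMeasure (P N)]
    (h : ∀ N, Ω N → ℝ) (hmeas : ∀ N, Measurable (h N))
    (β : ℝ) (s : ℝ → EReal)
    (husc : UpperSemicontinuous s)
    (hne : ∃ u : ℝ, s u ≠ ⊥)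
    (hLDP : IsLDP P h fun u => -(s u))
    (hmoment : ∀ M : ℝ, ∀ᶠ L in (atTop : Filter ℝ), ∀ᶠ N : ℕ in atTop,
      (∫⁻ ω in {ω | L ≤ -(β * h N ω)},
          ENNReal.ofReal (Real.exp (-(β * (N : ℝ) * h N ω))) ∂(P N))
        ≤ ENNReal.ofReal (Real.exp (-(N : ℝ) * M)))
    (φβ : ℝ) (hφ : (⨅ u : ℝ, ((β * u : ℝ) : EReal) - s u) = (φβ : EReal))
    (Z : ℕ → ℝ≥0∞)
    (hZ : ∀ N : ℕ, Z N = ∫⁻ ω, ENNReal.ofReal (Real.exp (-(β * (N : ℝ) * h N ω))) ∂(P N))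
    (hZfin : ∀ N, 0 < Z N ∧ Z N ≠ ∞)
    (Pcan : ∀ N, Measure (Ω N))
    (hPcan : ∀ N : ℕ, Pcan N =
      (Z N)⁻¹ • (P N).withDensity fun ω => ENNReal.ofReal (Real.exp (-(β * (N : ℝ) * h N ω)))) :
    IsLDP Pcan h fun u => ((β * u : ℝ) : EReal) - s u - (φβ : EReal) := by
  -- Z bounds
  have hZub : ∀ r : ℝ, r < φβ → ∀ᶠ N : ℕ in atTop,
      Z N ≤ ENNReal.ofReal (Real.exp (-(N : ℝ) * r)) := by
    intro r hrφ
    have hiu : (r : EReal) < ⨅ u ∈ (Set.univ : Set ℝ), ((β * u : ℝ) : EReal) - s u := by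
      rw [iInf_univ, hφ]
      exact_mod_cast hrφ
    have := varadhan_upper P h hmeas β s hLDP hmoment Set.univ isClosed_univ r hiu
    filter_upwards [this] with N hN
    rw [hZ N]
    calc ∫⁻ ω, ENNReal.ofReal (Real.exp (-(β * (N : ℝ) * h N ω))) ∂(P N)
        = ∫⁻ ω in {ω | h N ω ∈ (Set.univ : Set ℝ)},
            ENNReal.ofReal (Real.exp (-(β * (N : ℝ) * h N ω))) ∂(P N) := by
          simp
      _ ≤ _ := hN
  have hZlb : ∀ t : ℝ, φβ < t → ∀ᶠ N : ℕ in atTop,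
      ENNReal.ofReal (Real.exp (-(N : ℝ) * t)) ≤ Z N := by
    intro t htφ
    have hiu : (⨅ u ∈ (Set.univ : Set ℝ), ((β * u : ℝ) : EReal) - s u) < (t : EReal) := by
      rw [iInf_univ, hφ]
      exact_mod_cast htφ
    have := varadhan_lower P h hmeas β s hLDP Set.univ isOpen_univ t hiu
    filter_upwards [this] with N hN
    rw [hZ N]
    calc ENNReal.ofReal (Real.exp (-(N : ℝ) * t))
        ≤ ∫⁻ ω in {ω | h N ω ∈ (Set.univ : Set ℝ)},
            ENNReal.ofReal (Real.exp (-(β * (N : ℝ) * h N ω))) ∂(P N) := hN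
      _ = _ := by simp
  constructor
  · -- nonneg
    intro u
    have h1 : (φβ : EReal) ≤ ((β * u : ℝ) : EReal) - s u := by
      rw [← hφ]
      exact iInf_le _ u
    rw [EReal.le_sub_iff_add_le (Or.inl (EReal.coe_ne_bot φβ)) (Or.inl (EReal.coe_ne_top φβ)),
      zero_add]
    exact h1
  · -- lsc
    have l1 : LowerSemicontinuous fun u : ℝ => ((β * u : ℝ) : EReal) :=
      (continuous_coe_real_ereal.comp (continuous_const.mul continuous_id)).lowerSemicontinuous
    have l2 : LowerSemicontinuous fun u : ℝ => -(s u) := hLDP.lsc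
    have l3 : LowerSemicontinuous fun u : ℝ => ((β * u : ℝ) : EReal) + -(s u) :=
      l1.add' l2 fun x => EReal.continuousAt_add (Or.inl (EReal.coe_ne_top _))
        (Or.inl (EReal.coe_ne_bot _))
    have l4 : LowerSemicontinuous
        fun u : ℝ => (((β * u : ℝ) : EReal) + -(s u)) + -(φβ : EReal) :=
      l3.add' lowerSemicontinuous_const fun x =>
        EReal.continuousAt_add (Or.inr (by simp : -(φβ : EReal) ≠ ⊥))
          (Or.inr (by simp : -(φβ : EReal) ≠ ⊤))
    simpa only [sub_eq_add_neg] using l4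
  · -- upper bound
    intro C hC c hc
    obtain ⟨c1, hcc1E, hc1iE⟩ := EReal.exists_between_coe_real hc
    have hcc1 : c < c1 := by exact_mod_cast hcc1E
    set ε : ℝ := (c1 - c) / 2 with hε
    have hεpos : 0 < ε := by rw [hε]; linarith
    have key : ((c + ε + φβ : ℝ) : EReal) < ⨅ u ∈ C, ((β * u : ℝ) : EReal) - s u := by
      refine lt_of_lt_of_le
        (by exact_mod_cast (by rw [hε]; linarith : c + ε + φβ < c1 + φβ)
          : ((c + ε + φβ : ℝ) : EReal) < ((c1 + φβ : ℝ) : EReal))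
        (le_iInf₂ fun u hu => ?_)
      have h1 : (c1 : EReal) < (((β * u : ℝ) : EReal) - s u) - (φβ : EReal) :=
        lt_of_lt_of_le hc1iE (iInf₂_le u hu)
      rw [EReal.lt_sub_iff_add_lt (Or.inl (EReal.coe_ne_bot φβ))
        (Or.inl (EReal.coe_ne_top φβ))] at h1
      rw [EReal.coe_add]
      exact le_of_lt h1
    have hup := varadhan_upper P h hmeas β s hLDP hmoment C hC (c + ε + φβ) key
    have hzlb := hZlb (φβ + ε / 2) (by linarith)
    filter_upwards [hup, hzlb] with N hN1 hN2
    have hCm : MeasurableSet {ω | h N ω ∈ C} := (hmeas N) hC.measurableSet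
    rw [hPcan N, Measure.smul_apply, smul_eq_mul, withDensity_apply _ hCm]
    obtain ⟨hZpos, hZfin'⟩ := hZfin N
    calc (Z N)⁻¹ * ∫⁻ ω in {ω | h N ω ∈ C},
          ENNReal.ofReal (Real.exp (-(β * (N : ℝ) * h N ω))) ∂(P N)
        ≤ (Z N)⁻¹ * ENNReal.ofReal (Real.exp (-(N : ℝ) * (c + ε + φβ))) :=
          mul_le_mul_right hN1 _
      _ ≤ (ENNReal.ofReal (Real.exp (-(N : ℝ) * (φβ + ε / 2))))⁻¹ *
            ENNReal.ofReal (Real.exp (-(N : ℝ) * (c + ε + φβ))) :=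
          mul_le_mul_left (ENNReal.inv_le_inv' hN2) _
      _ = ENNReal.ofReal (Real.exp ((N : ℝ) * (φβ + ε / 2))) *
            ENNReal.ofReal (Real.exp (-(N : ℝ) * (c + ε + φβ))) := by
          rw [← ENNReal.ofReal_inv_of_pos (Real.exp_pos _), ← Real.exp_neg]
          ring_nf
      _ = ENNReal.ofReal (Real.exp ((N : ℝ) * (φβ + ε / 2) + -(N : ℝ) * (c + ε + φβ))) := by
          rw [← ENNReal.ofReal_mul (Real.exp_nonneg _), ← Real.exp_add]
      _ ≤ ENNReal.ofReal (Real.exp (-(N : ℝ) * c)) := by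
          refine ENNReal.ofReal_le_ofReal (Real.exp_le_exp.2 ?_)
          have hN0 : (0 : ℝ) ≤ (N : ℝ) := Nat.cast_nonneg N
          nlinarith [hN0, hεpos]
  · -- lower bound
    intro O hO c hc
    obtain ⟨c1, hic1E, hc1cE⟩ := EReal.exists_between_coe_real hc
    have hc1c : c1 < c := by exact_mod_cast hc1cE
    set ε : ℝ := (c - c1) / 2 with hε
    have hεpos : 0 < ε := by rw [hε]; linarith
    have h2 : (⨅ u ∈ O, ((β * u : ℝ) : EReal) - s u) < ((c1 + φβ : ℝ) : EReal) := by
      simp only [iInf_lt_iff] at hic1E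
      obtain ⟨u0, hu0O, hu0⟩ := hic1E
      refine lt_of_le_of_lt (iInf₂_le u0 hu0O) ?_
      rw [EReal.sub_lt_iff (Or.inl (EReal.coe_ne_bot φβ))
        (Or.inl (EReal.coe_ne_top φβ))] at hu0
      rw [EReal.coe_add]
      exact hu0
    have hlow := varadhan_lower P h hmeas β s hLDP O hO (c1 + φβ) h2
    have hzu := hZub (φβ - ε) (by linarith)
    filter_upwards [hlow, hzu] with N hN1 hN2
    have hOm : MeasurableSet {ω | h N ω ∈ O} := (hmeas N) hO.measurableSet
    rw [hPcan N, Measure.smul_apply, smul_eq_mul, withDensity_apply _ hOm]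
    obtain ⟨hZpos, hZfin'⟩ := hZfin N
    have hstep : Z N * ENNReal.ofReal (Real.exp (-(N : ℝ) * c))
        ≤ ENNReal.ofReal (Real.exp (-(N : ℝ) * (c1 + φβ))) := by
      calc Z N * ENNReal.ofReal (Real.exp (-(N : ℝ) * c))
          ≤ ENNReal.ofReal (Real.exp (-(N : ℝ) * (φβ - ε))) *
              ENNReal.ofReal (Real.exp (-(N : ℝ) * c)) := mul_le_mul_left hN2 _
        _ = ENNReal.ofReal (Real.exp (-(N : ℝ) * (φβ - ε) + -(N : ℝ) * c)) := by
            rw [← ENNReal.ofReal_mul (Real.exp_nonneg _), ← Real.exp_add]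
        _ ≤ ENNReal.ofReal (Real.exp (-(N : ℝ) * (c1 + φβ))) := by
            refine ENNReal.ofReal_le_ofReal (Real.exp_le_exp.2 ?_)
            have hN0 : (0 : ℝ) ≤ (N : ℝ) := Nat.cast_nonneg N
            nlinarith [hN0, hεpos]
    calc ENNReal.ofReal (Real.exp (-(N : ℝ) * c))
        = (Z N)⁻¹ * (Z N * ENNReal.ofReal (Real.exp (-(N : ℝ) * c))) := by
          rw [← mul_assoc, ENNReal.inv_mul_cancel hZpos.ne' hZfin', one_mul]
      _ ≤ (Z N)⁻¹ * ENNReal.ofReal (Real.exp (-(N : ℝ) * (c1 + φβ))) :=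
          mul_le_mul_right hstep _
      _ ≤ (Z N)⁻¹ * ∫⁻ ω in {ω | h N ω ∈ O},
            ENNReal.ofReal (Real.exp (-(β * (N : ℝ) * h N ω))) ∂(P N) :=
          mul_le_mul_right hN1 _
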